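/- In a connected graph where every vertex has degree at most Δ, if the graph is neither a complete graph nor an odd cycle, then the graph has a proper vertex coloring with Δ colors. -/

import Mathlib

open SimpleGraph

def IsOddCycle {V : Type*} (G : SimpleGraph V) : Prop :=
  G.Connected ∧ (∀ v, (G.neighborSet v).ncard = 2) ∧ Odd (Nat.card V)

def TwoConnected {V : Type*} (G : SimpleGraph V) : Prop :=
  3 ≤ Nat.card V ∧ ∀ v : V, (G.induce {w : V | w ≠ v}).Connected

def DegreeChoosable {V : Type*} (G : SimpleGraph V) : Prop :=
  ∀ L : V → Finset ℕ, (∀ v, (G.neighborSet v).ncard ≤ (L v).card) →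
    ∃ c : V → ℕ, (∀ v, c v ∈ L v) ∧ ∀ u w, G.Adj u w → c u ≠ c w

def IsDCC {V : Type*} (G : SimpleGraph V) (S : Set V) : Prop :=
  TwoConnected (G.induce S) ∧ G.induce S ≠ ⊤ ∧ ¬ IsOddCycle (G.induce S)

def RadiusLE {V : Type*} (G : SimpleGraph V) (S : Set V) (r : ℕ) : Prop :=
  ∃ u : S, ∀ w : S, (G.induce S).dist u w ≤ r

def NoSmallDCC {V : Type*} (G : SimpleGraph V) (r : ℕ) : Prop :=
  ∀ S : Set V, IsDCC G S → ¬ RadiusLE G S r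

def gball {V : Type*} (G : SimpleGraph V) (v : V) (r : ℕ) : Set V :=
  {u | G.Reachable v u ∧ G.dist v u ≤ r}

noncomputable def childCount {V : Type*} (G : SimpleGraph V) (v u : V) : ℕ :=
  {w | G.Adj u w ∧ G.dist v w = G.dist v u + 1}.ncard

section BrooksDev
variable {V : Type*}


/-- reachability within a set -/
def ReachIn (G : SimpleGraph V) (S : Set V) (u w : V) : Prop :=
  ∃ p : G.Walk u w, ∀ x ∈ p.support, x ∈ S

/-- connectivity of a set -/
def Conn (G : SimpleGraph V) (S : Set V) : Prop :=
  S.Nonempty ∧ ∀ u ∈ S, ∀ w ∈ S, ReachIn G S u w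

/-- component of u within S -/
def compOf (G : SimpleGraph V) (S : Set V) (u : V) : Set V :=
  {w | ReachIn G S u w}

namespace ReachIn

variable {G : SimpleGraph V} {S : Set V} {u w x : V}

theorem refl (hu : u ∈ S) : ReachIn G S u u :=
  ⟨Walk.nil, by simp [hu]⟩

theorem mem_left (h : ReachIn G S u w) : u ∈ S := by
  obtain ⟨p, hp⟩ := h; exact hp u p.start_mem_support

theorem mem_right (h : ReachIn G S u w) : w ∈ S := by
  obtain ⟨p, hp⟩ := h; exact hp w p.end_mem_support

theorem symm (h : ReachIn G S u w) : ReachIn G S w u := by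
  obtain ⟨p, hp⟩ := h; exact ⟨p.reverse, by simpa using hp⟩

theorem trans (h : ReachIn G S u w) (h' : ReachIn G S w x) : ReachIn G S u x := by
  obtain ⟨p, hp⟩ := h; obtain ⟨q, hq⟩ := h'
  refine ⟨p.append q, ?_⟩
  intro y hy
  rcases (Walk.mem_support_append_iff _ _).1 hy with h | h
  · exact hp _ h
  · exact hq _ h

theorem adj (h : G.Adj u w) (hu : u ∈ S) (hw : w ∈ S) : ReachIn G S u w :=
  ⟨h.toWalk, by simp [hu, hw]⟩

theorem mono {T : Set V} (hST : S ⊆ T) (h : ReachIn G S u w) : ReachIn G T u w := by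
  obtain ⟨p, hp⟩ := h; exact ⟨p, fun x hx => hST (hp x hx)⟩

end ReachIn

namespace compOf

variable {G : SimpleGraph V} {S : Set V} {u w x : V}

theorem mem_self (hu : u ∈ S) : u ∈ compOf G S u := ReachIn.refl hu

theorem subset : compOf G S u ⊆ S := fun _ h => h.mem_right

theorem adj_mem (hw : w ∈ compOf G S u) (h : G.Adj w x) (hx : x ∈ S) :
    x ∈ compOf G S u :=
  ReachIn.trans hw (ReachIn.adj h hw.mem_right hx)

theorem eq_of_mem (hw : w ∈ compOf G S u) : compOf G S w = compOf G S u := by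
  ext y
  exact ⟨fun hy => ReachIn.trans hw hy, fun hy => ReachIn.trans ((hw : ReachIn G S u w).symm) hy⟩

theorem conn (hu : u ∈ S) : Conn G (compOf G S u) := by
  constructor
  · exact ⟨u, mem_self hu⟩
  · rintro a ha b hb
    have hab : ReachIn G S a b := ReachIn.trans (ReachIn.symm ha) hb
    obtain ⟨p, hp⟩ := hab
    refine ⟨p, ?_⟩
    -- every vertex on a walk within S from a is in the component of a
    have : ∀ y ∈ p.support, ReachIn G S a y := by
      intro y hy
      obtain ⟨q, r, hq⟩ := (Walk.mem_support_iff_exists_append).1 hy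
      exact ⟨q, fun z hz => hp z (by subst hq; exact (Walk.mem_support_append_iff _ _).2 (Or.inl hz))⟩
    intro y hy
    exact ReachIn.trans ha (this y hy)

/-- a walk avoiding nothing outside S starting in the component stays in it -/
theorem walk_subset (ha : x ∈ compOf G S u) {b : V} (p : G.Walk x b)
    (hp : ∀ y ∈ p.support, y ∈ S) : b ∈ compOf G S u :=
  ReachIn.trans ha ⟨p, hp⟩

end compOf


theorem greedyList [Fintype V] (G : SimpleGraph V) (pos : V → ℕ) (L : V → Finset ℕ) :
    ∀ (n : ℕ) (S : Set V), S.ncard ≤ n → Set.InjOn pos S →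
    (∀ u ∈ S, ({w ∈ S | G.Adj u w ∧ pos w < pos u}).ncard < (L u).card) →
    ∃ c : V → ℕ, (∀ u ∈ S, c u ∈ L u) ∧ ∀ u ∈ S, ∀ w ∈ S, G.Adj u w → c u ≠ c w := by
  intro n
  induction n with
  | zero =>
    intro S hS _ _
    have : S = ∅ := Set.ncard_eq_zero (Set.toFinite S) |>.mp (Nat.le_zero.mp hS)
    subst this
    exact ⟨fun _ => 0, by simp, by simp⟩
  | succ n ih =>
    intro S hS hinj hdeg
    classical
    rcases S.eq_empty_or_nonempty with rfl | hne
    · exact ⟨fun _ => 0, by simp, by simp⟩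
    have hSfin : S.Finite := Set.toFinite S
    obtain ⟨m, hm, hmax⟩ := Set.exists_max_image S pos hSfin hne
    set S' := S \ {m} with hS'
    have hS'sub : S' ⊆ S := Set.diff_subset
    have hcard : S'.ncard ≤ n := by
      have h1 : S'.ncard < S.ncard := by
        rw [hS']
        exact Set.ncard_diff_singleton_lt_of_mem hm hSfin
      omega
    obtain ⟨c, hcL, hcprop⟩ := ih S' hcard (hinj.mono hS'sub) (fun u hu => by
      refine lt_of_le_of_lt (Set.ncard_le_ncard ?_ (hSfin.subset (fun x hx => hx.1))) (hdeg u (hS'sub hu))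
      intro x hx; exact ⟨hS'sub hx.1, hx.2⟩)
    -- the set of earlier neighbors of m
    set E : Set V := {w ∈ S | G.Adj m w ∧ pos w < pos m} with hE
    have hEfin : E.Finite := hSfin.subset (fun x hx => hx.1)
    set used : Finset ℕ := hEfin.toFinset.image c with husedeq
    have husedcard : used.card ≤ E.ncard := by
      calc used.card ≤ hEfin.toFinset.card := Finset.card_image_le
        _ = E.ncard := (Set.ncard_eq_toFinset_card E hEfin).symm
    have : used.card < (L m).card := lt_of_le_of_lt husedcard (hdeg m hm)
    have hex : ∃ k ∈ L m, k ∉ used := by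
      by_contra h
      push_neg at h
      exact absurd (Finset.card_le_card h) (not_le.mpr this)
    obtain ⟨k, hkL, hknot⟩ := hex
    refine ⟨Function.update c m k, ?_, ?_⟩
    · intro u hu
      rcases eq_or_ne u m with rfl | hum
      · simpa using hkL
      · rw [Function.update_of_ne hum]
        exact hcL u ⟨hu, hum⟩
    · intro u hu w hw hadj
      have key : ∀ x ∈ S, x ≠ m → G.Adj m x → c x ∈ used := by
        intro x hx hxm hax
        have hxE : x ∈ E := by
          refine ⟨hx, hax, ?_⟩
          exact lt_of_le_of_ne (hmax x hx) (fun h => hxm (hinj hx hm h))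
        simp only [husedeq, Finset.mem_image, Set.Finite.mem_toFinset]
        exact ⟨x, hxE, rfl⟩
      rcases eq_or_ne u m with rfl | hum
      · have hwm : w ≠ u := fun h => G.loopless.irrefl u (h ▸ hadj)
        rw [Function.update_self, Function.update_of_ne hwm]
        exact fun h => hknot (h ▸ key w hw hwm hadj)
      · rw [Function.update_of_ne hum]
        rcases eq_or_ne w m with rfl | hwm
        · rw [Function.update_self]
          intro h
          exact hknot (h ▸ key u hu hum hadj.symm)
        · rw [Function.update_of_ne hwm]
          exact hcprop u ⟨hu, hum⟩ w ⟨hw, hwm⟩ hadj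


theorem pen {G : SimpleGraph V} {S : Set V} {x v : V} (p : G.Walk x v)
    (hp : ∀ y ∈ p.support, y ∈ S) (hvx : v ≠ x) :
    ∃ w ∈ S, G.Adj w v ∧ ∃ q : G.Walk x w,
      (∀ y ∈ q.support, y ∈ S) ∧ q.length + 1 ≤ p.length := by
  induction p with
  | nil => exact absurd rfl hvx
  | @cons a b c h p' ih =>
    by_cases hbv : c = b
    · subst hbv
      refine ⟨a, hp a (by simp), h, Walk.nil, by
        simpa using hp a (by simp), by simp⟩
    · obtain ⟨w, hwS, hwv, q', hq'S, hq'len⟩ := ih (fun y hy => hp y (by simp [hy])) hbv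
      refine ⟨w, hwS, hwv, Walk.cons h q', ?_, ?_⟩
      · intro y hy
        rw [Walk.support_cons] at hy
        rcases List.mem_cons.mp hy with rfl | hy'
        · exact hp y (by simp)
        · exact hq'S y hy'
      · simpa using Nat.succ_le_succ hq'len

theorem connGreedy [Fintype V] (G : SimpleGraph V) {S : Set V} (hconn : Conn G S) {v0 : V}
    (hv0 : v0 ∈ S) (L : V → Finset ℕ)
    (hdeg : ∀ u ∈ S, u ≠ v0 → {w | w ∈ S ∧ G.Adj u w}.ncard ≤ (L u).card)
    (hdeg0 : {w | w ∈ S ∧ G.Adj v0 w}.ncard < (L v0).card) :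
    ∃ c : V → ℕ, (∀ u ∈ S, c u ∈ L u) ∧ ∀ u ∈ S, ∀ w ∈ S, G.Adj u w → c u ≠ c w := by
  classical
  set N := Fintype.card V with hN
  have hNpos : 0 < N := Fintype.card_pos_iff.mpr ⟨v0⟩
  set d : V → ℕ := fun u =>
    sInf {n | ∃ p : G.Walk v0 u, (∀ x ∈ p.support, x ∈ S) ∧ p.length = n} with hd
  have hne : ∀ u ∈ S, ∃ p : G.Walk v0 u, (∀ x ∈ p.support, x ∈ S) ∧ p.length ≤ N - 1 := by
    intro u hu
    obtain ⟨p, hp⟩ := hconn.2 v0 hv0 u hu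
    refine ⟨p.bypass, fun x hx => hp x (p.support_bypass_subset hx), ?_⟩
    have := (p.bypass_isPath).length_lt
    omega
  have hdle : ∀ u ∈ S, d u ≤ N - 1 := by
    intro u hu
    obtain ⟨p, hpS, hpl⟩ := hne u hu
    exact le_trans (Nat.sInf_le ⟨p, hpS, rfl⟩) hpl
  have hd0 : d v0 = 0 := Nat.eq_zero_of_le_zero (Nat.sInf_le ⟨Walk.nil, by simpa using hv0, rfl⟩)
  have hpred : ∀ u ∈ S, u ≠ v0 → ∃ w, w ∈ S ∧ G.Adj w u ∧ d w < d u := by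
    intro u hu hne'
    have hset : {n | ∃ p : G.Walk v0 u, (∀ x ∈ p.support, x ∈ S) ∧ p.length = n}.Nonempty := by
      obtain ⟨p, hpS, _⟩ := hne u hu; exact ⟨p.length, p, hpS, rfl⟩
    obtain ⟨p, hpS, hpl⟩ := Nat.sInf_mem hset
    obtain ⟨w, hwS, hwu, q, hqS, hql⟩ := pen p hpS hne'
    have hdw : d w ≤ q.length := Nat.sInf_le ⟨q, hqS, rfl⟩
    have hdu : p.length = d u := hpl
    exact ⟨w, hwS, hwu, by omega⟩
  set ι : V → ℕ := fun v => ((Fintype.equivFin V) v : ℕ) with hι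
  have hιlt : ∀ v, ι v < N := fun v => ((Fintype.equivFin V) v).isLt
  have hιinj : Function.Injective ι := fun a b h =>
    (Fintype.equivFin V).injective (Fin.val_injective h)
  set pos : V → ℕ := fun u => (N - d u) * N + ι u with hpos
  have hmod : ∀ u, pos u % N = ι u := by
    intro u
    have : (N * (N - d u) + ι u) % N = ι u % N := Nat.mul_add_mod _ _ _
    rw [hpos]
    simp only []
    rw [Nat.mul_comm]
    simpa [Nat.mod_eq_of_lt (hιlt u)] using this
  have hposinj : Set.InjOn pos S := by
    intro a _ b _ hab
    apply hιinj
    rw [← hmod a, ← hmod b, hab]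
  have hmono : ∀ u ∈ S, ∀ w, d w < d u → pos u < pos w := by
    intro u hu w hdw
    have h1 : d u ≤ N := le_trans (hdle u hu) (Nat.sub_le _ _)
    have h2 : N - d u + 1 ≤ N - d w := by omega
    calc pos u < (N - d u) * N + N := by
          exact Nat.add_lt_add_left (hιlt u) _
      _ = (N - d u + 1) * N := by ring
      _ ≤ (N - d w) * N := Nat.mul_le_mul_right _ h2
      _ ≤ pos w := Nat.le_add_right _ _
  have hkey : ∀ u ∈ S, {w | w ∈ S ∧ G.Adj u w ∧ pos w < pos u}.ncard < (L u).card := by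
    intro u hu
    by_cases huv : u = v0
    · subst huv
      have hsub0 : {w | w ∈ S ∧ G.Adj u w ∧ pos w < pos u} ⊆ {w | w ∈ S ∧ G.Adj u w} :=
        fun x hx => ⟨hx.1, hx.2.1⟩
      exact lt_of_le_of_lt (Set.ncard_le_ncard hsub0 (Set.toFinite _)) hdeg0
    · obtain ⟨w, hwS, hwu, hdw⟩ := hpred u hu huv
      have hposlt : pos u < pos w := hmono u hu w hdw
      have hsub : {w' | w' ∈ S ∧ G.Adj u w' ∧ pos w' < pos u} ⊆
          {w' | w' ∈ S ∧ G.Adj u w'} \ {w} := by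
        intro x hx
        obtain ⟨hx1, hx2, hx3⟩ := hx
        refine ⟨⟨hx1, hx2⟩, ?_⟩
        intro hxw
        rw [Set.mem_singleton_iff] at hxw
        subst hxw
        omega
      have h1 : ({w' | w' ∈ S ∧ G.Adj u w'}).ncard ≤ (L u).card := hdeg u hu huv
      have hwmem : w ∈ {w' | w' ∈ S ∧ G.Adj u w'} := ⟨hwS, hwu.symm⟩
      have h2 : ({w' | w' ∈ S ∧ G.Adj u w'} \ {w}).ncard <
          {w' | w' ∈ S ∧ G.Adj u w'}.ncard := by
        have := Set.ncard_diff_singleton_lt_of_mem hwmem (Set.toFinite _)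
        simpa using this
      have h3 := Set.ncard_le_ncard hsub (Set.toFinite _)
      omega
  exact greedyList G pos L S.ncard S le_rfl hposinj hkey


theorem avoid {G : SimpleGraph V} {z : V} :
    ∀ (n : ℕ) {w u : V} (p : G.Walk w u), p.length ≤ n → u ≠ z →
    ReachIn G {z}ᶜ w u ∨ ∃ a, G.Adj z a ∧ ReachIn G {z}ᶜ a u := by
  intro n
  induction n with
  | zero =>
    intro w u p hp hu
    have : w = u := by
      cases p with
      | nil => rfl
      | cons h q => simp at hp
    subst this
    exact Or.inl ⟨Walk.nil, by simpa using hu⟩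
  | succ n ih =>
    intro w u p hp hu
    cases p with
    | nil => exact Or.inl ⟨Walk.nil, by simpa using hu⟩
    | @cons _ b _ h q =>
      have hq : q.length ≤ n := by simp at hp; omega
      rcases ih q hq hu with hreach | ⟨a', ha', hr⟩
      · by_cases hwz : w = z
        · subst hwz
          exact Or.inr ⟨b, h, hreach⟩
        · refine Or.inl ?_
          obtain ⟨q', hq'⟩ := hreach
          refine ⟨Walk.cons h q', ?_⟩
          intro x hx
          rw [Walk.support_cons] at hx
          rcases List.mem_cons.mp hx with rfl | hx'
          · simpa using hwz
          · exact hq' x hx'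
      · exact Or.inr ⟨a', ha', hr⟩

theorem glue [Fintype V] (G : SimpleGraph V) (Δ : ℕ) (hΔ : 1 ≤ Δ)
    (hmax : ∀ v, (G.neighborSet v).ncard ≤ Δ)
    (hconn : G.Connected) (z : V) (hz : ¬ Conn G ({z}ᶜ : Set V)) :
    ∃ c : V → ℕ, (∀ v, c v < Δ) ∧ ∀ u w, G.Adj u w → c u ≠ c w := by
  classical
  by_cases hempty : ({z}ᶜ : Set V) = ∅
  · have hall : ∀ v : V, v = z := by
      intro v
      by_contra h
      exact (Set.eq_empty_iff_forall_notMem.mp hempty v) h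
    refine ⟨fun _ => 0, fun _ => hΔ, ?_⟩
    intro u w hadj
    exfalso
    rw [hall u, hall w] at hadj
    exact G.loopless.irrefl z hadj
  have hne : ({z}ᶜ : Set V).Nonempty := Set.nonempty_iff_ne_empty.mpr hempty
  have hsplit : ∃ u1 ∈ ({z}ᶜ : Set V), ∃ u2 ∈ ({z}ᶜ : Set V), ¬ ReachIn G {z}ᶜ u1 u2 := by
    by_contra h
    push_neg at h
    exact hz ⟨hne, h⟩
  obtain ⟨u1, hu1, u2, hu2, h12⟩ := hsplit
  have zn : ∀ u : V, u ≠ z → ∃ a, G.Adj z a ∧ a ∈ compOf G {z}ᶜ u := by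
    intro u hu
    obtain ⟨p⟩ := hconn z u
    rcases avoid p.length p le_rfl hu with hr | ⟨a, ha, hr⟩
    · exact absurd hr.mem_left (by simp)
    · exact ⟨a, ha, hr.symm⟩
  have hCC : compOf G {z}ᶜ u1 ≠ compOf G {z}ᶜ u2 := by
    intro h
    exact h12 (h ▸ compOf.mem_self hu2 : u2 ∈ compOf G {z}ᶜ u1)
  have hcomp : ∀ u : V, u ≠ z → ∃ c : V → ℕ,
      (∀ v ∈ compOf G {z}ᶜ u ∪ {z}, c v < Δ) ∧
      (∀ p ∈ compOf G {z}ᶜ u ∪ {z}, ∀ q ∈ compOf G {z}ᶜ u ∪ {z}, G.Adj p q → c p ≠ c q) ∧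
      c z = 0 := by
    intro u hu
    set C := compOf G {z}ᶜ u with hC
    set S := C ∪ {z} with hSdef
    have huz : u ∈ ({z}ᶜ : Set V) := hu
    have huC : u ∈ C := compOf.mem_self huz
    obtain ⟨a, haz, haC⟩ := zn u hu
    have hzS : z ∈ S := Or.inr rfl
    have hCS : C ⊆ S := Set.subset_union_left
    have hconnS : Conn G S := by
      refine ⟨⟨z, hzS⟩, ?_⟩
      have key : ∀ p ∈ S, ReachIn G S p u := by
        intro p hp
        rcases hp with hpC | hpz
        · exact ((compOf.conn huz).2 p hpC u huC).mono hCS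
        · rw [Set.mem_singleton_iff] at hpz
          subst hpz
          exact ReachIn.trans (ReachIn.adj haz hzS (hCS haC))
            (((compOf.conn huz).2 a haC u huC).mono hCS)
      intro p hp q hq
      exact ReachIn.trans (key p hp) (ReachIn.symm (key q hq))
    have hdegS : ∀ v ∈ S, v ≠ z → {w | w ∈ S ∧ G.Adj v w}.ncard ≤ (Finset.range Δ).card := by
      intro v _ _
      rw [Finset.card_range]
      refine le_trans (Set.ncard_le_ncard ?_ (Set.toFinite _)) (hmax v)
      intro x hx
      exact hx.2
    have hCne : ∃ u', u' ∈ ({z}ᶜ : Set V) ∧ compOf G {z}ᶜ u' ≠ C := by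
      by_cases h1 : compOf G {z}ᶜ u1 = C
      · exact ⟨u2, hu2, fun h => hCC (h1.trans h.symm)⟩
      · exact ⟨u1, hu1, h1⟩
    obtain ⟨u', hu'z, hu'C⟩ := hCne
    obtain ⟨a', ha'z, ha'C⟩ := zn u' hu'z
    have ha'notC : a' ∉ C := by
      intro h
      exact hu'C ((compOf.eq_of_mem ha'C).symm.trans (compOf.eq_of_mem h))
    have hdegz : {w | w ∈ S ∧ G.Adj z w}.ncard < (Finset.range Δ).card := by
      rw [Finset.card_range]
      have hsub : {w | w ∈ S ∧ G.Adj z w} ⊆ G.neighborSet z \ {a'} := by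
        intro x hx
        refine ⟨hx.2, ?_⟩
        rcases hx.1 with hxC | hxz
        · intro h
          rw [Set.mem_singleton_iff] at h
          exact ha'notC (h ▸ hxC)
        · exfalso
          rw [Set.mem_singleton_iff] at hxz
          exact G.loopless.irrefl z (hxz ▸ hx.2)
      have h1 := Set.ncard_le_ncard hsub (Set.toFinite _)
      have h2 : (G.neighborSet z \ {a'}).ncard < (G.neighborSet z).ncard :=
        Set.ncard_diff_singleton_lt_of_mem ha'z (Set.toFinite _)
      have h3 := hmax z
      omega
    obtain ⟨c, hcL, hcprop⟩ := connGreedy G hconnS hzS (fun _ => Finset.range Δ) hdegS hdegz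
    set σ := Equiv.swap (c z) 0 with hσ
    refine ⟨fun v => σ (c v), ?_, ?_, Equiv.swap_apply_left _ _⟩
    · intro v hv
      have h1 : c v < Δ := by simpa using hcL v hv
      have h2 : c z < Δ := by simpa using hcL z hzS
      show Equiv.swap (c z) 0 (c v) < Δ
      rw [Equiv.swap_apply_def]
      split_ifs <;> omega
    · intro p hp q hq hadj h
      exact hcprop p hp q hq hadj (σ.injective h)
  set F : Set V → (V → ℕ) := fun C =>
    if h : ∃ c : V → ℕ, (∀ v ∈ C ∪ {z}, c v < Δ) ∧
        (∀ p ∈ C ∪ {z}, ∀ q ∈ C ∪ {z}, G.Adj p q → c p ≠ c q) ∧ c z = 0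
    then h.choose else fun _ => 0 with hF
  have hFspec : ∀ u : V, u ≠ z →
      (∀ v ∈ compOf G {z}ᶜ u ∪ {z}, F (compOf G {z}ᶜ u) v < Δ) ∧
      (∀ p ∈ compOf G {z}ᶜ u ∪ {z}, ∀ q ∈ compOf G {z}ᶜ u ∪ {z},
        G.Adj p q → F (compOf G {z}ᶜ u) p ≠ F (compOf G {z}ᶜ u) q) ∧
      F (compOf G {z}ᶜ u) z = 0 := by
    intro u hu
    have h := hcomp u hu
    simp only [hF]
    rw [dif_pos h]
    exact h.choose_spec
  refine ⟨fun v => if v = z then 0 else F (compOf G {z}ᶜ v) v, ?_, ?_⟩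
  · intro v
    by_cases hv : v = z
    · show (if v = z then 0 else F (compOf G {z}ᶜ v) v) < Δ
      rw [if_pos hv]
      omega
    · show (if v = z then 0 else F (compOf G {z}ᶜ v) v) < Δ
      rw [if_neg hv]
      exact (hFspec v hv).1 v (Or.inl (compOf.mem_self hv))
  · intro p q hadj
    by_cases hp : p = z <;> by_cases hq : q = z
    · exfalso; rw [hp, hq] at hadj; exact G.loopless.irrefl z hadj
    · simp only [if_pos hp, if_neg hq]
      intro h
      have hspec := hFspec q hq
      have := hspec.2.1 z (Or.inr rfl) q (Or.inl (compOf.mem_self hq)) (hp ▸ hadj)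
      rw [hspec.2.2] at this
      exact this h
    · simp only [if_neg hp, if_pos hq]
      intro h
      have hspec := hFspec p hp
      have := hspec.2.1 p (Or.inl (compOf.mem_self hp)) z (Or.inr rfl) (hq ▸ hadj)
      rw [hspec.2.2] at this
      exact this h
    · simp only [if_neg hp, if_neg hq]
      have hqC : q ∈ compOf G {z}ᶜ p := compOf.adj_mem (compOf.mem_self hp) hadj hq
      have heq : compOf G {z}ᶜ q = compOf G {z}ᶜ p := compOf.eq_of_mem hqC
      rw [heq]
      exact (hFspec p hp).2.1 p (Or.inl (compOf.mem_self hp)) q (Or.inl hqC) hadj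

/-- a walk within S starting in a "closed" set D stays in D -/
theorem confine {G : SimpleGraph V} {S D : Set V}
    (hD : ∀ d ∈ D, ∀ e, G.Adj d e → e ∈ S → e ∈ D) :
    ∀ {u w : V} (p : G.Walk u w), (∀ y ∈ p.support, y ∈ S) → u ∈ D → w ∈ D := by
  intro u w p
  induction p with
  | nil => exact fun _ h => h
  | @cons _ b _ h q ih =>
    intro hp hu
    have hbS : b ∈ S := hp b (by simp)
    exact ih (fun y hy => hp y (by rw [Walk.support_cons]; exact List.mem_cons_of_mem _ hy))
      (hD _ hu b h hbS)

theorem triple {G : SimpleGraph V} :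
    ∀ (n : ℕ) {u w : V} (p : G.Walk u w), p.length ≤ n → p.IsPath → ¬ G.Adj u w → u ≠ w →
    ∃ v a b : V, G.Adj v a ∧ G.Adj v b ∧ ¬ G.Adj a b ∧ a ≠ b := by
  intro n
  induction n with
  | zero =>
    intro u w p hlen _ _ huw
    cases p with
    | nil => exact absurd rfl huw
    | cons h q => simp at hlen
  | succ n ih =>
    intro u w p hlen hpath hadj huw
    cases p with
    | nil => exact absurd rfl huw
    | @cons _ b _ h q =>
      cases q with
      | nil => exact absurd h hadj
      | @cons _ c _ h2 q2 =>
        have hpath2 := (Walk.cons_isPath_iff _ _).mp hpath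
        have huc : u ≠ c := by
          intro hh
          subst hh
          exact hpath2.2 (by rw [Walk.support_cons]; exact List.mem_cons_of_mem _ q2.start_mem_support)
        by_cases hac : G.Adj u c
        · have hq2path : (Walk.cons hac q2).IsPath := by
            rw [Walk.cons_isPath_iff]
            refine ⟨((Walk.cons_isPath_iff _ _).mp hpath2.1).1, ?_⟩
            intro hh
            exact hpath2.2 (by rw [Walk.support_cons]; exact List.mem_cons_of_mem _ hh)
          refine ih (Walk.cons hac q2) ?_ hq2path hadj huw
          simp at hlen ⊢
          omega
        · exact ⟨b, u, c, h.symm, h2, hac, huc⟩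

def Frag (G : SimpleGraph V) (x y : V) (C : Set V) : Prop :=
  x ≠ y ∧ (∃ u, u ∉ ({x, y} : Set V) ∧ C = compOf G ({x, y} : Set V)ᶜ u) ∧
    ∃ w, w ∉ C ∧ w ∉ ({x, y} : Set V)

/-- x has a neighbor in every component of the complement of the pair {x,y},
    assuming y is not a cutvertex -/
theorem nbr_in_comp {G : SimpleGraph V} {x y : V} (hxy : x ≠ y)
    (hy : Conn G ({y}ᶜ : Set V)) {t : V} (ht : t ∈ (({x, y} : Set V)ᶜ)) :
    ∃ a ∈ compOf G (({x, y} : Set V)ᶜ) t, G.Adj x a := by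
  by_contra hno
  push_neg at hno
  have htx : t ≠ x := fun h => ht (by rw [h]; exact Or.inl rfl)
  have hty : t ≠ y := fun h => ht (by rw [h]; exact Or.inr rfl)
  have hclosed : ∀ d ∈ compOf G (({x, y} : Set V)ᶜ) t, ∀ e, G.Adj d e →
      e ∈ ({y}ᶜ : Set V) → e ∈ compOf G (({x, y} : Set V)ᶜ) t := by
    intro d hd e hde he
    have hex : e ≠ x := by
      intro hh
      subst hh
      exact hno d hd hde.symm
    refine compOf.adj_mem hd hde ?_
    intro hmem
    rcases hmem with h1 | h1
    · exact hex h1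
    · exact he h1
  obtain ⟨p, hp⟩ := hy.2 t (by simpa using hty) x (by simpa using hxy)
  have hxmem : x ∈ compOf G (({x, y} : Set V)ᶜ) t :=
    confine hclosed p hp (compOf.mem_self ht)
  exact (compOf.subset hxmem) (Or.inl rfl)

theorem lemK [Fintype V] (G : SimpleGraph V) (hconn : G.Connected)
    (hdeg3 : ∀ v, 3 ≤ (G.neighborSet v).ncard)
    (h2c : ∀ z : V, Conn G ({z}ᶜ : Set V))
    (hclique : G ≠ ⊤) :
    ∃ v a b : V, G.Adj v a ∧ G.Adj v b ∧ ¬ G.Adj a b ∧ a ≠ b ∧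
      Conn G (({a, b} : Set V)ᶜ) := by
  classical
  have hcard : 4 ≤ Fintype.card V := by
    obtain ⟨v0⟩ := hconn.nonempty
    have h1 : (insert v0 (G.neighborSet v0)).ncard = (G.neighborSet v0).ncard + 1 :=
      Set.ncard_insert_of_notMem (by simp) (Set.toFinite _)
    have h2 : (insert v0 (G.neighborSet v0)).ncard ≤ Fintype.card V := by
      have := Set.ncard_le_ncard (Set.subset_univ (insert v0 (G.neighborSet v0)))
        (Set.toFinite _)
      rwa [Set.ncard_univ, Nat.card_eq_fintype_card] at this
    have := hdeg3 v0
    omega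
  have hpair : ∃ u w : V, u ≠ w ∧ ¬ G.Adj u w := by
    by_contra h
    push_neg at h
    apply hclique
    ext u w
    simp only [top_adj]
    exact ⟨fun h' => G.ne_of_adj h', fun h' => h u w h'⟩
  by_cases hfrag : ∃ x y C, Frag G x y C
  case neg =>
    obtain ⟨u₀, w₀, huw₀, hnadj₀⟩ := hpair
    obtain ⟨p⟩ := hconn u₀ w₀
    obtain ⟨v, a, b, hva, hvb, hnab, hab⟩ :=
      triple p.bypass.length p.bypass le_rfl p.bypass_isPath hnadj₀ huw₀
    refine ⟨v, a, b, hva, hvb, hnab, hab, ?_⟩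
    have hne : (({a, b} : Set V)ᶜ).Nonempty := by
      by_contra h
      rw [Set.not_nonempty_iff_eq_empty] at h
      have hsub : (Set.univ : Set V) ⊆ ({a, b} : Set V) := by
        intro t _
        by_contra ht
        exact (Set.eq_empty_iff_forall_notMem.mp h t) ht
      have h1 := Set.ncard_le_ncard hsub (Set.toFinite _)
      rw [Set.ncard_univ, Nat.card_eq_fintype_card] at h1
      have h2 : ({a, b} : Set V).ncard ≤ 2 :=
        le_trans (Set.ncard_insert_le _ _) (by simp)
      omega
    refine ⟨hne, ?_⟩
    intro p₁ hp₁ q₁ hq₁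
    by_contra hnr
    exact hfrag ⟨a, b, compOf G (({a, b} : Set V)ᶜ) p₁, hab, ⟨p₁, hp₁, rfl⟩,
      ⟨q₁, hnr, hq₁⟩⟩
  case pos =>
    obtain ⟨x0, y0, C0, hfrag0⟩ := hfrag
    have hTne : {n | ∃ x y C, Frag G x y C ∧ C.ncard = n}.Nonempty :=
      ⟨C0.ncard, x0, y0, C0, hfrag0, rfl⟩
    obtain ⟨x, y, C, hfragC, hCcard⟩ := Nat.sInf_mem hTne
    have hmin : ∀ x' y' C', Frag G x' y' C' → C.ncard ≤ C'.ncard := by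
      intro x' y' C' h
      rw [hCcard]
      exact Nat.sInf_le ⟨x', y', C', h, rfl⟩
    obtain ⟨hxy, ⟨u0, hu0, hCeq⟩, ⟨w0, hw0C, hw0xy⟩⟩ := hfragC
    have hCsub : C ⊆ (({x, y} : Set V)ᶜ) := hCeq ▸ compOf.subset
    have hCclosed : ∀ d ∈ C, ∀ e, G.Adj d e → e ∉ ({x, y} : Set V) → e ∈ C := by
      intro d hd e hde he
      rw [hCeq] at hd ⊢
      exact compOf.adj_mem hd hde he
    have hCeqm : ∀ v ∈ C, compOf G (({x, y} : Set V)ᶜ) v = C := by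
      intro v hv
      rw [hCeq] at hv ⊢
      exact compOf.eq_of_mem hv
    have hxnbr : ∀ t ∈ (({x, y} : Set V)ᶜ), ∃ a' ∈ compOf G (({x, y} : Set V)ᶜ) t, G.Adj x a' :=
      fun t ht => nbr_in_comp hxy (h2c y) ht
    have hynbr : ∀ t ∈ (({x, y} : Set V)ᶜ), ∃ a' ∈ compOf G (({x, y} : Set V)ᶜ) t, G.Adj y a' := by
      intro t ht
      have ht' : t ∈ (({y, x} : Set V)ᶜ) := by rwa [Set.pair_comm y x]
      have h := nbr_in_comp hxy.symm (h2c x) ht'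
      rwa [Set.pair_comm y x] at h
    obtain ⟨a, haC', hxa⟩ := hxnbr u0 hu0
    have haC : a ∈ C := by rw [hCeq]; exact haC'
    obtain ⟨b, hbC', hxb⟩ := hxnbr w0 hw0xy
    have hbnotC : b ∉ C := by
      intro h
      apply hw0C
      have h1 : compOf G (({x, y} : Set V)ᶜ) w0 = C :=
        (compOf.eq_of_mem hbC').symm.trans (hCeqm b h)
      exact h1 ▸ compOf.mem_self hw0xy
    have hxC : x ∉ C := fun h => (hCsub h) (Or.inl rfl)
    have hyC : y ∉ C := fun h => (hCsub h) (Or.inr rfl)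
    have hab : a ≠ b := fun h => hbnotC (h ▸ haC)
    have hbSxy : b ∉ ({x, y} : Set V) := compOf.subset hbC'
    have hnab : ¬ G.Adj a b := fun h => hbnotC (hCclosed a haC b h hbSxy)
    have hxa' : x ≠ a := G.ne_of_adj hxa
    have hxb' : x ≠ b := G.ne_of_adj hxb
    have hya' : y ≠ a := fun h => hyC (h ▸ haC)
    -- C is not just {a}
    have hCne_a : ∃ t ∈ C, t ≠ a := by
      by_contra h
      push_neg at h
      have hnbrs : G.neighborSet a ⊆ ({x, y} : Set V) := by
        intro e he
        by_contra hexy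
        have h1 : e ∈ C := hCclosed a haC e he hexy
        have h2 : e = a := h e h1
        exact G.loopless.irrefl a (h2 ▸ he)
      have h1 := Set.ncard_le_ncard hnbrs (Set.toFinite _)
      have h2 : ({x, y} : Set V).ncard ≤ 2 := le_trans (Set.ncard_insert_le _ _) (by simp)
      have := hdeg3 a
      omega
    -- every component of C \ {a} has an x-neighbor
    have hcompx : ∀ t, t ∈ C → t ≠ a → ∃ d ∈ compOf G (C \ {a}) t, G.Adj x d := by
      intro t ht hta
      have htCa : t ∈ C \ {a} := ⟨ht, hta⟩
      by_contra hno
      push_neg at hno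
      have hDsub : compOf G (C \ {a}) t ⊆ C \ {a} := compOf.subset
      by_cases hyn : ∃ d ∈ compOf G (C \ {a}) t, G.Adj y d
      · -- fragment with cut {a,y}
        have hclosed2 : ∀ d ∈ compOf G (C \ {a}) t, ∀ e, G.Adj d e →
            e ∈ (({a, y} : Set V)ᶜ) → e ∈ compOf G (C \ {a}) t := by
          intro d hd e hde he
          have hdC : d ∈ C := (hDsub hd).1
          have hex : e ≠ x := fun hh => hno d hd (hh ▸ hde.symm)
          have hexy : e ∉ ({x, y} : Set V) := by
            rintro (h1 | h1)
            · exact hex h1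
            · exact he (Or.inr h1)
          have heC : e ∈ C := hCclosed d hdC e hde hexy
          exact compOf.adj_mem hd hde ⟨heC, fun hm => he (Or.inl hm)⟩
        have hsubD : compOf G (({a, y} : Set V)ᶜ) t ⊆ compOf G (C \ {a}) t := by
          intro q hq
          obtain ⟨pq, hpq⟩ := hq
          exact confine hclosed2 pq hpq (compOf.mem_self htCa)
        have hfr : Frag G a y (compOf G (({a, y} : Set V)ᶜ) t) := by
          refine ⟨hya'.symm, ⟨t, ?_, rfl⟩, ⟨x, ?_, ?_⟩⟩
          · rintro (h1 | h1)
            · exact hta h1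
            · exact hyC (h1 ▸ ht)
          · intro h
            exact hxC ((hDsub (hsubD h)).1)
          · rintro (h1 | h1)
            · exact hxa' h1
            · exact hxy h1
        have h1 := Set.ncard_le_ncard (hsubD.trans hDsub) (Set.toFinite _)
        have h2 : (C \ {a}).ncard < C.ncard :=
          Set.ncard_diff_singleton_lt_of_mem haC (Set.toFinite _)
        have := hmin _ _ _ hfr
        omega
      · -- sealed off by a alone: contradicts no-cutvertex
        push_neg at hyn
        have hclosed3 : ∀ d ∈ compOf G (C \ {a}) t, ∀ e, G.Adj d e →
            e ∈ ({a}ᶜ : Set V) → e ∈ compOf G (C \ {a}) t := by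
          intro d hd e hde he
          have hdC : d ∈ C := (hDsub hd).1
          have hex : e ≠ x := fun hh => hno d hd (hh ▸ hde.symm)
          have hey : e ≠ y := fun hh => hyn d hd (hh ▸ hde.symm)
          have hexy : e ∉ ({x, y} : Set V) := by
            rintro (h1 | h1)
            · exact hex h1
            · exact hey h1
          have heC : e ∈ C := hCclosed d hdC e hde hexy
          exact compOf.adj_mem hd hde ⟨heC, he⟩
        obtain ⟨pq, hpq⟩ := (h2c a).2 t (by simp [fun h => hta h]) x (by simp [hxa'])
        have hxmem : x ∈ compOf G (C \ {a}) t :=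
          confine hclosed3 pq hpq (compOf.mem_self htCa)
        exact hxC ((hDsub hxmem).1)
    -- y has a neighbor in C other than a
    have hyc : ∃ c ∈ C, c ≠ a ∧ G.Adj y c := by
      by_contra hno
      push_neg at hno
      obtain ⟨t, ht, hta⟩ := hCne_a
      have htCa : t ∈ C \ {a} := ⟨ht, hta⟩
      have hDsub : compOf G (C \ {a}) t ⊆ C \ {a} := compOf.subset
      have hclosed5 : ∀ d ∈ compOf G (C \ {a}) t, ∀ e, G.Adj d e →
          e ∈ (({x, a} : Set V)ᶜ) → e ∈ compOf G (C \ {a}) t := by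
        intro d hd e hde he
        have hdC : d ∈ C := (hDsub hd).1
        have hex : e ≠ x := fun hh => he (Or.inl hh)
        have hey : e ≠ y := by
          intro hh
          exact hno d (hDsub hd).1 (fun hh2 => ((hDsub hd).2 (by simpa using hh2))) (hh ▸ hde.symm)
        have hexy : e ∉ ({x, y} : Set V) := by
          rintro (h1 | h1)
          · exact hex h1
          · exact hey h1
        have heC : e ∈ C := hCclosed d hdC e hde hexy
        exact compOf.adj_mem hd hde ⟨heC, fun hm => he (Or.inr hm)⟩
      have hsubD : compOf G (({x, a} : Set V)ᶜ) t ⊆ compOf G (C \ {a}) t := by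
        intro q hq
        obtain ⟨pq, hpq⟩ := hq
        exact confine hclosed5 pq hpq (compOf.mem_self htCa)
      have hfr : Frag G x a (compOf G (({x, a} : Set V)ᶜ) t) := by
        refine ⟨hxa', ⟨t, ?_, rfl⟩, ⟨y, ?_, ?_⟩⟩
        · rintro (h1 | h1)
          · exact absurd (h1 ▸ ht) hxC
          · exact hta h1
        · intro h
          exact hyC ((hDsub (hsubD h)).1)
        · rintro (h1 | h1)
          · exact hxy h1.symm
          · exact hya' h1
      have h1 := Set.ncard_le_ncard (hsubD.trans hDsub) (Set.toFinite _)
      have h2 : (C \ {a}).ncard < C.ncard :=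
        Set.ncard_diff_singleton_lt_of_mem haC (Set.toFinite _)
      have := hmin _ _ _ hfr
      omega
    obtain ⟨c, hcC, hca, hyc⟩ := hyc
    -- final assembly
    refine ⟨x, a, b, hxa, hxb, hnab, hab, ?_⟩
    have hxSab : x ∈ (({a, b} : Set V)ᶜ) := by
      rintro (h1 | h1)
      · exact hxa' h1
      · exact hxb' h1
    have hySab : y ∈ (({a, b} : Set V)ᶜ) := by
      rintro (h1 | h1)
      · exact hya' h1
      · exact hbSxy (h1 ▸ Or.inr rfl)
    have hCaSab : C \ {a} ⊆ (({a, b} : Set V)ᶜ) := by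
      rintro e ⟨heC, hea⟩ (h1 | h1)
      · exact hea h1
      · exact hbnotC (h1 ▸ heC)
    have reach1 : ∀ t ∈ C, t ≠ a → ReachIn G (({a, b} : Set V)ᶜ) x t := by
      intro t ht hta
      obtain ⟨d, hdD, hxd⟩ := hcompx t ht hta
      have htCa : t ∈ C \ {a} := ⟨ht, hta⟩
      have hdt := (compOf.conn htCa).2 d hdD t (compOf.mem_self htCa)
      exact ReachIn.trans
        (ReachIn.adj hxd hxSab (hCaSab (compOf.subset hdD)))
        (hdt.mono (Set.Subset.trans compOf.subset hCaSab))
    have reachy : ReachIn G (({a, b} : Set V)ᶜ) x y :=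
      ReachIn.trans (reach1 c hcC hca) (ReachIn.adj hyc.symm (hCaSab ⟨hcC, hca⟩) hySab)
    have reach : ∀ t ∈ (({a, b} : Set V)ᶜ), ReachIn G (({a, b} : Set V)ᶜ) x t := by
      intro t htab
      have hta : t ≠ a := fun h => htab (Or.inl h)
      have htb : t ≠ b := fun h => htab (Or.inr h)
      by_cases htx : t = x
      · subst htx; exact ReachIn.refl hxSab
      by_cases hty : t = y
      · subst hty; exact reachy
      by_cases htC : t ∈ C
      · exact reach1 t htC hta
      · have htxy : t ∈ (({x, y} : Set V)ᶜ) := by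
          rintro (h1 | h1)
          · exact htx h1
          · exact hty h1
        have htCtb : t ∈ compOf G (({x, y} : Set V)ᶜ) t \ {b} :=
          ⟨compOf.mem_self htxy, by simpa using htb⟩
        have hDtsub : compOf G (compOf G (({x, y} : Set V)ᶜ) t \ {b}) t ⊆
            compOf G (({x, y} : Set V)ᶜ) t \ {b} := compOf.subset
        have hanotCt : a ∉ compOf G (({x, y} : Set V)ᶜ) t := by
          intro h
          apply htC
          have h1 : compOf G (({x, y} : Set V)ᶜ) t = C :=
            ((compOf.eq_of_mem h).symm.trans (hCeqm a haC))
          exact h1 ▸ compOf.mem_self htxy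
        have hCtbSab : compOf G (({x, y} : Set V)ᶜ) t \ {b} ⊆ (({a, b} : Set V)ᶜ) := by
          rintro e ⟨heCt, heb⟩ (h1 | h1)
          · exact hanotCt (h1 ▸ heCt)
          · exact heb (by simpa using h1)
        have hxory : ∃ e ∈ compOf G (compOf G (({x, y} : Set V)ᶜ) t \ {b}) t,
            G.Adj x e ∨ G.Adj y e := by
          by_contra hno
          push_neg at hno
          have hclosed4 : ∀ d ∈ compOf G (compOf G (({x, y} : Set V)ᶜ) t \ {b}) t, ∀ e,
              G.Adj d e → e ∈ ({b}ᶜ : Set V) → e ∈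
              compOf G (compOf G (({x, y} : Set V)ᶜ) t \ {b}) t := by
            intro d hd e hde heb
            have hdCt : d ∈ compOf G (({x, y} : Set V)ᶜ) t := (hDtsub hd).1
            have hex : e ≠ x := fun hh => (hno d hd).1 (hh ▸ hde.symm)
            have hey : e ≠ y := fun hh => (hno d hd).2 (hh ▸ hde.symm)
            have heCt : e ∈ compOf G (({x, y} : Set V)ᶜ) t := by
              refine compOf.adj_mem hdCt hde ?_
              rintro (h1 | h1)
              · exact hex h1
              · exact hey h1
            exact compOf.adj_mem hd hde ⟨heCt, heb⟩
          obtain ⟨pq, hpq⟩ := (h2c b).2 t (by simp [htb]) x (by simp [hxb'])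
          have hxmem := confine hclosed4 pq hpq (compOf.mem_self htCtb)
          exact (compOf.subset ((hDtsub hxmem).1)) (Or.inl rfl)
        obtain ⟨e, heDt, hxye⟩ := hxory
        have heSab : e ∈ (({a, b} : Set V)ᶜ) := hCtbSab (hDtsub heDt)
        have hxe : ReachIn G (({a, b} : Set V)ᶜ) x e := by
          rcases hxye with h | h
          · exact ReachIn.adj h hxSab heSab
          · exact ReachIn.trans reachy (ReachIn.adj h hySab heSab)
        exact ReachIn.trans hxe
          (((compOf.conn htCtb).2 e heDt t (compOf.mem_self htCtb)).mono
            (Set.Subset.trans compOf.subset hCtbSab))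
    exact ⟨⟨x, hxSab⟩, fun p hp q hq => ReachIn.trans (ReachIn.symm (reach p hp)) (reach q hq)⟩

theorem evenCycle [Fintype V] (G : SimpleGraph V) (hconn : G.Connected)
    (hreg : ∀ v, (G.neighborSet v).ncard = 2) (heven : ¬ Odd (Fintype.card V)) :
    ∃ c : V → ℕ, (∀ v, c v < 2) ∧ ∀ u w, G.Adj u w → c u ≠ c w := by
  classical
  obtain ⟨v0⟩ := hconn.nonempty
  set d : V → ℕ := fun u => G.dist v0 u with hd
  by_cases hgood : ∀ u w, G.Adj u w → d u % 2 ≠ d w % 2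
  · exact ⟨fun u => d u % 2, fun u => Nat.mod_lt _ (by omega), hgood⟩
  exfalso
  apply heven
  push_neg at hgood
  obtain ⟨u₁, w₁, hadj₁, hpar⟩ := hgood
  have hadj_le : ∀ u w, G.Adj u w → d w ≤ d u + 1 := by
    intro u w h
    have h1 : G.dist u w ≤ 1 := by simpa using G.dist_le h.toWalk
    have h2 : G.dist v0 w ≤ G.dist v0 u + G.dist u w := hconn.dist_triangle
    simp only [hd]
    omega
  have heq₁ : d u₁ = d w₁ := by
    have h1 := hadj_le u₁ w₁ hadj₁
    have h2 := hadj_le w₁ u₁ hadj₁.symm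
    omega
  have hpred : ∀ u, d u ≠ 0 → ∃ w, G.Adj w u ∧ d w + 1 = d u := by
    intro u hu
    obtain ⟨p, hp⟩ := hconn.exists_walk_length_eq_dist v0 u
    have hune : u ≠ v0 := by
      intro h
      subst h
      exact hu (by simp [hd, SimpleGraph.dist_self])
    obtain ⟨w, _, hwu, q, _, hql⟩ := pen (S := Set.univ) p (by simp) hune
    have h1 : G.dist v0 w ≤ q.length := G.dist_le q
    have h2 := hadj_le w u hwu
    refine ⟨w, hwu, ?_⟩
    simp only [hd] at h2 ⊢
    omega
  set A : ℕ → Finset V := fun j => Finset.univ.filter (fun p => d p = j) with hA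
  have hAmem : ∀ j p, p ∈ A j ↔ d p = j := by
    intro j p
    simp [hA]
  have hTne : {j | ∃ u w, G.Adj u w ∧ d u = j ∧ d w = j}.Nonempty :=
    ⟨d u₁, u₁, w₁, hadj₁, rfl, heq₁.symm⟩
  set k := sInf {j | ∃ u w, G.Adj u w ∧ d u = j ∧ d w = j} with hk
  obtain ⟨u, w, huw, hdu, hdw⟩ := Nat.sInf_mem hTne
  have hne_uw : u ≠ w := G.ne_of_adj huw
  have hk1 : 1 ≤ k := by
    by_contra h
    push_neg at h
    have h0 : d u = 0 := by omega
    have h0' : d w = 0 := by omega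
    have e1 : v0 = u := hconn.dist_eq_zero_iff.mp h0
    have e2 : v0 = w := hconn.dist_eq_zero_iff.mp h0'
    exact hne_uw (e1.symm.trans e2)
  have hthree : ∀ p q1 q2 q3 : V, G.Adj p q1 → G.Adj p q2 → G.Adj p q3 →
      q1 ≠ q2 → q1 ≠ q3 → q2 ≠ q3 → False := by
    intro p q1 q2 q3 h1 h2 h3 h12 h13 h23
    have hsub : ({q1, q2, q3} : Set V) ⊆ G.neighborSet p := by
      intro e he
      rcases he with rfl | he
      · exact h1
      rcases he with rfl | he
      · exact h2
      · rw [Set.mem_singleton_iff] at he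
        subst he
        exact h3
    have hcard3 : ({q1, q2, q3} : Set V).ncard = 3 := by
      rw [Set.ncard_insert_of_notMem (by simp [h12, h13]), Set.ncard_pair h23]
    have hle := Set.ncard_le_ncard hsub (Set.toFinite _)
    rw [hcard3, hreg p] at hle
    omega
  have hstep : ∀ j, 1 ≤ j → (A (j+1)).card ≤ (A j).card := by
    intro j hj
    have hmapsto : ∀ q ∈ A (j+1), ∃ p, G.Adj p q ∧ d p = j := by
      intro q hq
      rw [hAmem] at hq
      obtain ⟨p, hpq, hpd⟩ := hpred q (by omega)
      exact ⟨p, hpq, by omega⟩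
    set f : V → V := fun q => if h : ∃ p, G.Adj p q ∧ d p = j then h.choose else q with hf
    have hfspec : ∀ q ∈ A (j+1), G.Adj (f q) q ∧ d (f q) = j := by
      intro q hq
      have h := hmapsto q hq
      simp only [hf]
      rw [dif_pos h]
      exact h.choose_spec
    apply Finset.card_le_card_of_injOn f
    · intro q hq
      rw [Finset.mem_coe, hAmem]
      exact (hfspec q hq).2
    · intro q1 hq1 q2 hq2 hfq
      by_contra hne
      rw [Finset.mem_coe] at hq1 hq2
      have hs1 := hfspec q1 hq1
      have hs2 := hfspec q2 hq2
      rw [hAmem] at hq1 hq2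
      obtain ⟨r, hrp, hrd⟩ := hpred (f q1) (by omega)
      refine hthree (f q1) q1 q2 r hs1.1 (hfq ▸ hs2.1) hrp.symm hne ?_ ?_
      · intro h
        rw [h] at hq1
        omega
      · intro h
        rw [h] at hq2
        rw [hfq] at hrd
        omega
  have hA1 : (A 1).card ≤ 2 := by
    have hsub : ((A 1 : Finset V) : Set V) ⊆ G.neighborSet v0 := by
      intro q hq
      have : d q = 1 := by
        rw [← hAmem 1 q]
        exact hq
      exact SimpleGraph.dist_eq_one_iff_adj.mp this
    have := Set.ncard_le_ncard hsub (Set.toFinite _)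
    rwa [Set.ncard_coe_finset, hreg v0] at this
  have hupper : ∀ j, 1 ≤ j → (A j).card ≤ 2 := by
    intro j
    induction j with
    | zero => omega
    | succ n ih =>
      intro _
      by_cases hn : n = 0
      · subst hn; exact hA1
      · exact le_trans (hstep n (by omega)) (ih (by omega))
  have hmono2 : ∀ i, 1 ≤ i → ∀ j, i ≤ j → (A j).card ≤ (A i).card := by
    intro i hi j
    induction j with
    | zero =>
      intro h
      rw [show i = 0 from by omega]
    | succ m ih =>
      intro hij
      rcases Nat.eq_or_lt_of_le hij with h | h
      · rw [h]
      · exact le_trans (hstep m (by omega)) (ih (by omega))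
  have huA : u ∈ A k := (hAmem k u).mpr hdu
  have hwA : w ∈ A k := (hAmem k w).mpr hdw
  have hsubuw : ({u, w} : Finset V) ⊆ A k := by
    intro e he
    rcases Finset.mem_insert.mp he with rfl | he
    · exact huA
    · rw [Finset.mem_singleton] at he
      subst he
      exact hwA
  have hAk2 : (A k).card = 2 := by
    have h1 : 2 ≤ (A k).card := by
      have := Finset.card_le_card hsubuw
      rwa [Finset.card_pair hne_uw] at this
    have h2 := hupper k hk1
    omega
  have hAkeq : A k = {u, w} :=
    (Finset.eq_of_subset_of_card_le hsubuw
      (by rw [hAk2, Finset.card_pair hne_uw])).symm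
  have hAk1 : A (k+1) = ∅ := by
    by_contra h
    obtain ⟨q, hq⟩ := Finset.nonempty_iff_ne_empty.mpr h
    have hdq : d q = k + 1 := (hAmem _ _).mp hq
    obtain ⟨p, hpq, hpd⟩ := hpred q (by omega)
    have hpk : d p = k := by omega
    have hpmem : p ∈ A k := (hAmem _ _).mpr hpk
    rw [hAkeq] at hpmem
    obtain ⟨r, hrp, hrd⟩ := hpred p (by omega)
    have hrk : d r + 1 = k := by omega
    rcases Finset.mem_insert.mp hpmem with rfl | hp2
    · refine hthree p w q r huw hpq hrp.symm ?_ ?_ ?_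
      · intro hh; rw [hh] at hdw; omega
      · intro hh; rw [hh] at hdw; omega
      · intro hh; rw [hh] at hdq; omega
    · rw [Finset.mem_singleton] at hp2
      subst hp2
      refine hthree p u q r huw.symm hpq hrp.symm ?_ ?_ ?_
      · intro hh; rw [hh] at hdu; omega
      · intro hh; rw [hh] at hdu; omega
      · intro hh; rw [hh] at hdq; omega
  have hlayer : ∀ n (p : V), d p = n → ∀ i, i ≤ n → ∃ z, d z = i := by
    intro n
    induction n with
    | zero => intro p hp i hi; exact ⟨p, by omega⟩
    | succ m ih =>
      intro p hp i hi
      rcases Nat.eq_or_lt_of_le hi with h | h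
      · exact ⟨p, by omega⟩
      · obtain ⟨r, _, hrd⟩ := hpred p (by omega)
        exact ih r (by omega) i (by omega)
  have hdle : ∀ p : V, d p ≤ k := by
    intro p
    by_contra h
    push_neg at h
    obtain ⟨z, hz⟩ := hlayer (d p) p rfl (k+1) (by omega)
    have : z ∈ A (k+1) := (hAmem _ _).mpr hz
    rw [hAk1] at this
    exact absurd this (Finset.notMem_empty z)
  have hcount : Fintype.card V = ∑ j ∈ Finset.range (k+1), (A j).card := by
    rw [← Finset.card_univ]
    exact Finset.card_eq_sum_card_fiberwise
      (fun x _ => Finset.mem_range.mpr (by have := hdle x; omega))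
  have hA0 : (A 0).card = 1 := by
    have heq : A 0 = {v0} := by
      ext p
      rw [hAmem, Finset.mem_singleton]
      constructor
      · intro hh
        exact (hconn.dist_eq_zero_iff.mp hh).symm
      · rintro rfl
        simp [hd, SimpleGraph.dist_self]
    rw [heq, Finset.card_singleton]
  have hsum : ∑ j ∈ Finset.range (k+1), (A j).card = 2 * k + 1 := by
    rw [Finset.sum_range_succ']
    have hconst : ∀ i ∈ Finset.range k, (A (i+1)).card = 2 := by
      intro i hi
      rw [Finset.mem_range] at hi
      have h1 := hupper (i+1) (by omega)
      have h2 : (A k).card ≤ (A (i+1)).card := hmono2 (i+1) (by omega) k (by omega)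
      omega
    rw [Finset.sum_congr rfl hconst, Finset.sum_const, Finset.card_range, hA0, smul_eq_mul]
    omega
  rw [Nat.odd_iff, hcount, hsum]
  omega

theorem brooksMain [Fintype V] (G : SimpleGraph V) (Δ : ℕ)
    (hconn : G.Connected)
    (hmax : ∀ v, (G.neighborSet v).ncard ≤ Δ)
    (hclique : G ≠ ⊤)
    (hodd : ¬ (G.Connected ∧ (∀ v, (G.neighborSet v).ncard = 2) ∧ Odd (Nat.card V))) :
    G.Colorable Δ := by
  classical
  suffices h : ∃ c : V → ℕ, (∀ v, c v < Δ) ∧ ∀ u w, G.Adj u w → c u ≠ c w by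
    obtain ⟨c, hb, hp⟩ := h
    rw [SimpleGraph.colorable_iff_exists_bdd_nat_coloring]
    exact ⟨SimpleGraph.Coloring.mk c (fun {u w} h => hp u w h), hb⟩
  obtain ⟨v00⟩ := hconn.nonempty
  have hConnU : Conn G Set.univ := ⟨⟨v00, trivial⟩, fun u _ w _ => by
    obtain ⟨p⟩ := hconn u w
    exact ⟨p, fun _ _ => trivial⟩⟩
  have hset : ∀ u : V, {w | w ∈ (Set.univ : Set V) ∧ G.Adj u w} = G.neighborSet u := by
    intro u
    ext w
    simp [SimpleGraph.mem_neighborSet]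
  by_cases hirr : ∃ v0, (G.neighborSet v0).ncard < Δ
  · obtain ⟨v0, hv0⟩ := hirr
    obtain ⟨c, hcL, hcp⟩ := connGreedy G hConnU (Set.mem_univ v0) (fun _ => Finset.range Δ)
      (fun u _ _ => by rw [hset, Finset.card_range]; exact hmax u)
      (by rw [hset, Finset.card_range]; exact hv0)
    exact ⟨c, fun v => by simpa using hcL v trivial, fun u w h => hcp u trivial w trivial h⟩
  push_neg at hirr
  have hreg : ∀ v, (G.neighborSet v).ncard = Δ := fun v => le_antisymm (hmax v) (hirr v)
  rcases Nat.lt_or_ge Δ 3 with hΔsmall | hΔ3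
  · interval_cases Δ
    · -- Δ = 0
      exfalso
      apply hclique
      have hnoadj : ∀ u w : V, ¬ G.Adj u w := by
        intro u w h
        have hmem : w ∈ G.neighborSet u := h
        have h0 := hreg u
        rw [Set.ncard_eq_zero (Set.toFinite _)] at h0
        rw [h0] at hmem
        exact hmem
      have hsing : ∀ u w : V, u = w := by
        intro u w
        obtain ⟨p⟩ := hconn u w
        cases p with
        | nil => rfl
        | cons h q => exact absurd h (hnoadj _ _)
      ext u w
      simp only [top_adj]
      exact ⟨fun h => absurd h (hnoadj u w), fun h => absurd (hsing u w) h⟩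
    · -- Δ = 1
      exfalso
      apply hclique
      obtain ⟨w0, hw0⟩ := Set.ncard_eq_one.mp (hreg v00)
      have hadj0 : G.Adj v00 w0 := by
        have hmem : w0 ∈ G.neighborSet v00 := by rw [hw0]; exact rfl
        exact hmem
      have hnb : G.neighborSet w0 = {v00} := by
        obtain ⟨z, hz⟩ := Set.ncard_eq_one.mp (hreg w0)
        have hmem : v00 ∈ G.neighborSet w0 := hadj0.symm
        rw [hz, Set.mem_singleton_iff] at hmem
        rw [hz, hmem]
      have hD : ∀ p ∈ ({v00, w0} : Set V), ∀ e, G.Adj p e →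
          e ∈ (Set.univ : Set V) → e ∈ ({v00, w0} : Set V) := by
        rintro p hp e he _
        rcases hp with rfl | hp
        · have hmem : e ∈ G.neighborSet p := he
          rw [hw0] at hmem
          exact Or.inr hmem
        · rw [Set.mem_singleton_iff] at hp
          subst hp
          have hmem : e ∈ G.neighborSet p := he
          rw [hnb] at hmem
          exact Or.inl hmem
      have hall : ∀ t : V, t ∈ ({v00, w0} : Set V) := by
        intro t
        obtain ⟨p⟩ := hconn v00 t
        exact confine hD p (fun _ _ => trivial) (Or.inl rfl)
      ext u w
      simp only [top_adj]
      refine ⟨fun h => G.ne_of_adj h, fun h => ?_⟩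
      rcases hall u with hu | hu
      · rcases hall w with hw | hw
        · exact absurd (hu.trans hw.symm) h
        · rw [Set.mem_singleton_iff] at hw
          rw [hu, hw]
          exact hadj0
      · rw [Set.mem_singleton_iff] at hu
        rcases hall w with hw | hw
        · rw [hu, hw]
          exact hadj0.symm
        · rw [Set.mem_singleton_iff] at hw
          exact absurd (hu.trans hw.symm) h
    · -- Δ = 2
      have hodd' : ¬ Odd (Fintype.card V) := by
        intro h
        exact hodd ⟨hconn, hreg, by rwa [Nat.card_eq_fintype_card]⟩
      exact evenCycle G hconn hreg hodd'
  · by_cases hz : ∃ z, ¬ Conn G ({z}ᶜ : Set V)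
    · obtain ⟨z, hzc⟩ := hz
      exact glue G Δ (by omega) hmax hconn z hzc
    · push_neg at hz
      obtain ⟨v, a, b, hva, hvb, hnab, hab, hSconn⟩ :=
        lemK G hconn (fun v => (hreg v) ▸ hΔ3) hz hclique
      have hvS : v ∈ (({a, b} : Set V)ᶜ) := by
        rintro (h1 | h1)
        · exact G.ne_of_adj hva h1
        · rw [Set.mem_singleton_iff] at h1
          exact G.ne_of_adj hvb h1
      set L : V → Finset ℕ := fun u =>
        if G.Adj a u ∨ G.Adj b u then (Finset.range Δ).erase 0 else Finset.range Δ with hL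
      have hLerase : ((Finset.range Δ).erase 0).card = Δ - 1 := by
        rw [Finset.card_erase_of_mem (Finset.mem_range.mpr (by omega)), Finset.card_range]
      have hLsub : ∀ u, L u ⊆ Finset.range Δ := by
        intro u
        simp only [hL]
        split_ifs
        · exact Finset.erase_subset _ _
        · exact fun x hx => hx
      have hsplit : ∀ u : V,
          {w | w ∈ (({a, b} : Set V)ᶜ) ∧ G.Adj u w}.ncard
            + (G.neighborSet u ∩ ({a, b} : Set V)).ncard = Δ := by
        intro u
        have hdisj : Disjoint {w | w ∈ (({a, b} : Set V)ᶜ) ∧ G.Adj u w}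
            (G.neighborSet u ∩ ({a, b} : Set V)) := by
          rw [Set.disjoint_left]
          rintro e ⟨he1, _⟩ ⟨_, he2⟩
          exact he1 he2
        have huni : {w | w ∈ (({a, b} : Set V)ᶜ) ∧ G.Adj u w}
            ∪ (G.neighborSet u ∩ ({a, b} : Set V)) = G.neighborSet u := by
          ext e
          constructor
          · rintro (h | h)
            · exact h.2
            · exact h.1
          · intro h
            by_cases he : e ∈ ({a, b} : Set V)
            · exact Or.inr ⟨h, he⟩
            · exact Or.inl ⟨he, h⟩
        have h4 := Set.ncard_union_eq hdisj (Set.toFinite _) (Set.toFinite _)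
        rw [huni] at h4
        rw [hreg u] at h4
        omega
      have hdeg : ∀ u ∈ (({a, b} : Set V)ᶜ), u ≠ v →
          {w | w ∈ (({a, b} : Set V)ᶜ) ∧ G.Adj u w}.ncard ≤ (L u).card := by
        intro u _ _
        by_cases hadjab : G.Adj a u ∨ G.Adj b u
        · simp only [hL, if_pos hadjab]
          rw [hLerase]
          have hne : (G.neighborSet u ∩ ({a, b} : Set V)).Nonempty := by
            rcases hadjab with h | h
            · exact ⟨a, h.symm, Or.inl rfl⟩
            · exact ⟨b, h.symm, Or.inr rfl⟩
          have hpos : 0 < (G.neighborSet u ∩ ({a, b} : Set V)).ncard :=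
            (Set.ncard_pos (Set.toFinite _)).mpr hne
          have := hsplit u
          omega
        · simp only [hL, if_neg hadjab, Finset.card_range]
          have := hsplit u
          omega
      have hdeg0 : {w | w ∈ (({a, b} : Set V)ᶜ) ∧ G.Adj v w}.ncard < (L v).card := by
        have hcond : G.Adj a v ∨ G.Adj b v := Or.inl hva.symm
        simp only [hL, if_pos hcond]
        rw [hLerase]
        have h2 : G.neighborSet v ∩ ({a, b} : Set V) = ({a, b} : Set V) := by
          ext e
          constructor
          · exact fun h => h.2
          · intro h
            refine ⟨?_, h⟩
            rcases h with rfl | h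
            · exact hva
            · rw [Set.mem_singleton_iff] at h
              subst h
              exact hvb
        have h3 := hsplit v
        rw [h2, Set.ncard_pair hab] at h3
        omega
      obtain ⟨c, hcL, hcp⟩ := connGreedy G hSconn hvS L hdeg hdeg0
      refine ⟨fun t => if t ∈ ({a, b} : Set V) then 0 else c t, ?_, ?_⟩
      · intro t
        show (if t ∈ ({a, b} : Set V) then 0 else c t) < Δ
        by_cases ht : t ∈ ({a, b} : Set V)
        · rw [if_pos ht]
          omega
        · rw [if_neg ht]
          exact Finset.mem_range.mp (hLsub t (hcL t ht))
      · intro p q hadj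
        show (if p ∈ ({a, b} : Set V) then 0 else c p) ≠ (if q ∈ ({a, b} : Set V) then 0 else c q)
        by_cases hp : p ∈ ({a, b} : Set V) <;> by_cases hq : q ∈ ({a, b} : Set V)
        · exfalso
          rcases hp with rfl | hp <;> rcases hq with rfl | hq
          · exact G.loopless.irrefl _ hadj
          · rw [Set.mem_singleton_iff] at hq
            subst hq
            exact hnab hadj
          · rw [Set.mem_singleton_iff] at hp
            subst hp
            exact hnab hadj.symm
          · rw [Set.mem_singleton_iff] at hp hq
            subst hp; subst hq
            exact G.loopless.irrefl _ hadj
        · rw [if_pos hp, if_neg hq]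
          have hcond : G.Adj a q ∨ G.Adj b q := by
            rcases hp with rfl | hp
            · exact Or.inl hadj
            · rw [Set.mem_singleton_iff] at hp
              subst hp
              exact Or.inr hadj
          have hmem := hcL q hq
          simp only [hL, if_pos hcond] at hmem
          intro hcontra
          exact (Finset.mem_erase.mp hmem).1 hcontra.symm
        · rw [if_neg hp, if_pos hq]
          have hcond : G.Adj a p ∨ G.Adj b p := by
            rcases hq with rfl | hq
            · exact Or.inl hadj.symm
            · rw [Set.mem_singleton_iff] at hq
              subst hq
              exact Or.inr hadj.symm
          have hmem := hcL p hp
          simp only [hL, if_pos hcond] at hmem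
          intro hcontra
          exact (Finset.mem_erase.mp hmem).1 hcontra
        · rw [if_neg hp, if_neg hq]
          exact hcp p hp q hq hadj

end BrooksDev

/-- Brooks' theorem: a connected graph with all degrees at most Δ which is
neither complete nor an odd cycle is Δ-colorable. -/
theorem stmt0 {V : Type*} [Fintype V] (G : SimpleGraph V) (Δ : ℕ)
    (hconn : G.Connected)
    (hmax : ∀ v, (G.neighborSet v).ncard ≤ Δ)
    (hclique : G ≠ ⊤)
    (hodd : ¬ IsOddCycle G) :
    G.Colorable Δ := by
  exact brooksMain G Δ hconn hmax hclique hodd
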